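/- arXiv:2411.13522 — 7 statements merged into one kernel-verified Lean document; each statement's English description precedes it below -/
import Mathlib

section
/- Let R be a local ring with maximal ideal m, I a proper ideal of finite index, and k ≥ 0. Then the number of primitive k-tuples in R/I equals [R:I]^k · (1 - 1/[R:m]^k). -/
/-- In a local ring `R` with maximal ideal `m` and a proper ideal `I` of finite index,
the number of primitive `k`-tuples of `R ⧸ I` is `[R:I]^k · (1 - 1/[R:m]^k)`. -/
theorem card_primitive_tuples_local {R : Type*} [CommRing R] [IsLocalRing R]
    (I : Ideal R) (hI : I ≠ ⊤) [Finite (R ⧸ I)] (k : ℕ) :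
    (Nat.card {a : Fin k → R ⧸ I // Ideal.span (Set.range a) = ⊤} : ℚ) =
      (Nat.card (R ⧸ I) : ℚ) ^ k *
        (1 - 1 / (Nat.card (R ⧸ IsLocalRing.maximalIdeal R) : ℚ) ^ k) := by
  classical
  have hnt : Nontrivial (R ⧸ I) := Ideal.Quotient.nontrivial_iff.mpr hI
  have hloc : IsLocalRing (R ⧸ I) :=
    IsLocalRing.of_surjective' (Ideal.Quotient.mk I) Ideal.Quotient.mk_surjective
  set S := R ⧸ I with hS
  set m' := IsLocalRing.maximalIdeal S with hm'
  have hle : I ≤ IsLocalRing.maximalIdeal R := IsLocalRing.le_maximalIdeal hI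
  -- comap of m' is m
  have h1 : m'.comap (Ideal.Quotient.mk I) = IsLocalRing.maximalIdeal R := by
    have := Ideal.comap_isMaximal_of_surjective (Ideal.Quotient.mk I)
      Ideal.Quotient.mk_surjective (K := m')
    exact IsLocalRing.eq_maximalIdeal this
  have hmap : (IsLocalRing.maximalIdeal R).map (Ideal.Quotient.mk I) = m' := by
    rw [← h1]; exact Ideal.map_comap_of_surjective _ Ideal.Quotient.mk_surjective m'
  -- residue field equiv
  have e : (S ⧸ m') ≃ (R ⧸ IsLocalRing.maximalIdeal R) := by
    rw [← hmap]
    exact (DoubleQuot.quotQuotEquivQuotOfLE hle).toEquiv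
  -- span characterization
  have hspan : ∀ a : Fin k → S, Ideal.span (Set.range a) = ⊤ ↔ ¬ (∀ i, a i ∈ m') := by
    intro a
    constructor
    · intro h hall
      have hsub : Ideal.span (Set.range a) ≤ m' := by
        rw [Ideal.span_le]
        rintro x ⟨i, rfl⟩; exact hall i
      rw [h] at hsub
      exact (IsLocalRing.maximalIdeal.isMaximal S).ne_top (top_le_iff.mp hsub)
    · intro h
      by_contra hne
      exact h fun i => IsLocalRing.le_maximalIdeal hne (Ideal.subset_span ⟨i, rfl⟩)
  -- counting
  have hfin : Finite S := ‹_›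
  have hcompl : Nat.card {a : Fin k → S // Ideal.span (Set.range a) = ⊤}
      = Nat.card S ^ k - Nat.card m' ^ k := by
    have e2 : {a : Fin k → S // ∀ i, a i ∈ m'} ≃ (Fin k → m') := Equiv.subtypePiEquivPi
    have := Fintype.ofFinite S
    have hc2 : Nat.card {a : Fin k → S // ∀ i, a i ∈ m'} = Nat.card m' ^ k := by
      rw [Nat.card_congr e2, Nat.card_fun]; simp
    have hc3 : Nat.card {a : Fin k → S // ¬ ∀ i, a i ∈ m'}
        = Nat.card S ^ k - Nat.card m' ^ k := by
      rw [← hc2]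
      simp only [Nat.card_eq_fintype_card]
      rw [Fintype.card_subtype_compl]
      congr 1
      rw [Fintype.card_fun]; simp
    rw [← hc3]
    exact Nat.card_congr (Equiv.subtypeEquiv (Equiv.refl _) (by simpa using hspan))
  -- cardinal relation
  have hidx : Nat.card (S ⧸ m') * Nat.card m' = Nat.card S := by
    have := m'.toAddSubgroup.index_mul_card
    rwa [AddSubgroup.index] at this
  set q := Nat.card S with hq
  set f := Nat.card (R ⧸ IsLocalRing.maximalIdeal R) with hf
  set c := Nat.card m' with hc
  have hef : Nat.card (S ⧸ m') = f := Nat.card_congr e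
  have hqfc : q = f * c := by rw [← hidx, hef]
  have hq0 : 0 < q := Nat.card_pos
  have hf0 : 0 < f := by
    have : Finite (S ⧸ m') := Quotient.finite _
    have : Nontrivial (S ⧸ m') := Ideal.Quotient.nontrivial_iff.mpr (IsLocalRing.maximalIdeal.isMaximal S).ne_top
    rw [← hef]; exact Nat.card_pos
  have hck : c ^ k ≤ q ^ k := Nat.pow_le_pow_left (by nlinarith) k
  rw [hcompl, Nat.cast_sub hck]
  push_cast
  rw [hqfc]
  have hfQ : (f : ℚ) ≠ 0 := Nat.cast_ne_zero.mpr hf0.ne'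
  field_simp
  push_cast
  ring
end

section
/- Let R be a Dedekind domain and I a nonzero ideal of finite index. Then the number of primitive k-tuples in R/I equals N(I)^k · ∏_{P | I} (1 - 1/N(P)^k), where the product is over prime ideals P dividing I and N denotes the absolute norm (index). -/
open Ideal UniqueFactorizationMonoid

section aux

variable {k : ℕ}

lemma span_range_pi_eq_top {ι : Type*} [Fintype ι] {A : ι → Type*} [∀ i, CommRing (A i)]
    (a : Fin k → ∀ i, A i) :
    Ideal.span (Set.range a) = ⊤ ↔ ∀ i, Ideal.span (Set.range fun j => a j i) = ⊤ := by
  simp only [Ideal.eq_top_iff_one, Ideal.mem_span_range_iff_exists_fun]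
  constructor
  · rintro ⟨c, hc⟩ i
    refine ⟨fun j => c j i, ?_⟩
    have := congrFun hc i
    simpa [Finset.sum_apply] using this
  · intro h
    choose c hc using h
    refine ⟨fun j i => c i j, ?_⟩
    funext i
    simpa [Finset.sum_apply] using hc i

lemma card_prim_pi {ι : Type*} [Fintype ι] (A : ι → Type*) [∀ i, CommRing (A i)] (k : ℕ) :
    Nat.card {a : Fin k → ∀ i, A i // Ideal.span (Set.range a) = ⊤}
      = ∏ i, Nat.card {b : Fin k → A i // Ideal.span (Set.range b) = ⊤} := by
  rw [← Nat.card_pi]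
  refine Nat.card_congr (((Equiv.piComm fun (j : Fin k) (i : ι) => A i).subtypeEquiv ?_).trans
    Equiv.subtypePiEquivPi)
  intro a
  exact span_range_pi_eq_top a

lemma span_range_comp_equiv_eq_top {A B : Type*} [CommRing A] [CommRing B] (f : A ≃+* B)
    (a : Fin k → A) :
    Ideal.span (Set.range (⇑f ∘ a)) = ⊤ ↔ Ideal.span (Set.range a) = ⊤ := by
  rw [Set.range_comp, show (⇑f : A → B) = ⇑(f : A →+* B) from rfl,
    ← Ideal.map_span (f : A →+* B)]
  constructor
  · intro h
    have := congrArg (Ideal.comap (f : A →+* B)) h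
    rwa [Ideal.comap_map_of_bijective (f : A →+* B) f.bijective, Ideal.comap_top] at this
  · intro h
    rw [h, Ideal.map_top]

variable {R : Type*} [CommRing R] [IsDomain R] [IsDedekindDomain R]

lemma span_eq_top_iff_pow (P : Ideal R) [hP : P.IsPrime] (hP0 : P ≠ ⊥) {e : ℕ} (he : e ≠ 0)
    (a : Fin k → R ⧸ P ^ e) :
    Ideal.span (Set.range a) = ⊤ ↔ ¬ ∀ j, a j ∈ P.map (Ideal.Quotient.mk (P ^ e)) := by
  constructor
  · intro h hall
    have hle : Ideal.span (Set.range a) ≤ P.map (Ideal.Quotient.mk (P ^ e)) := by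
      rw [Ideal.span_le]
      rintro x ⟨j, rfl⟩
      exact hall j
    rw [h, top_le_iff] at hle
    have h1 : (1 : R ⧸ P ^ e) ∈ P.map (Ideal.Quotient.mk (P ^ e)) := hle ▸ trivial
    obtain ⟨x, hx, hx1⟩ := (Ideal.mem_map_iff_of_surjective _ Ideal.Quotient.mk_surjective).mp h1
    have : x - 1 ∈ P ^ e := by
      rw [← Ideal.Quotient.eq_zero_iff_mem]
      simp [hx1]
    have h1P : (1 : R) ∈ P := by
      have := Ideal.pow_le_self he this
      have : x - (x - 1) ∈ P := P.sub_mem hx this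
      simpa using this
    exact hP.ne_top (Ideal.eq_top_of_isUnit_mem _ h1P isUnit_one)
  · intro h
    by_contra hne
    obtain ⟨M, hM, hle⟩ := Ideal.exists_le_maximal _ hne
    apply h
    haveI := hM.isPrime
    have hQ : (Ideal.comap (Ideal.Quotient.mk (P ^ e)) M).IsPrime :=
      Ideal.IsPrime.comap _
    have hPe : P ^ e ≤ Ideal.comap (Ideal.Quotient.mk (P ^ e)) M := by
      intro x hx
      simp only [Ideal.mem_comap]
      rw [Ideal.Quotient.eq_zero_iff_mem.mpr hx]
      exact M.zero_mem
    have hPQ : P ≤ Ideal.comap (Ideal.Quotient.mk (P ^ e)) M := hQ.le_of_pow_le hPe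
    have hmax : P.IsMaximal := hP.isMaximal hP0
    have hQP : Ideal.comap (Ideal.Quotient.mk (P ^ e)) M = P :=
      (hmax.eq_of_le hQ.ne_top hPQ).symm
    intro j
    have haj : a j ∈ M := hle (Ideal.subset_span ⟨j, rfl⟩)
    have : M = Ideal.map (Ideal.Quotient.mk (P ^ e)) (Ideal.comap (Ideal.Quotient.mk (P ^ e)) M) :=
      (Ideal.map_comap_of_surjective _ Ideal.Quotient.mk_surjective M).symm
    rw [this, hQP] at haj
    exact haj

lemma card_prim_pow (P : Ideal R) [hP : P.IsPrime] (hP0 : P ≠ ⊥) {e : ℕ} (he : e ≠ 0)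
    [Finite (R ⧸ P ^ e)] (k : ℕ) :
    (Nat.card {a : Fin k → R ⧸ P ^ e // Ideal.span (Set.range a) = ⊤} : ℚ)
      = (Nat.card (R ⧸ P ^ e) : ℚ) ^ k * (1 - 1 / (Nat.card (R ⧸ P) : ℚ) ^ k) := by
  classical
  set A := R ⧸ P ^ e
  set J : Ideal A := P.map (Ideal.Quotient.mk (P ^ e)) with hJ
  haveI : Fintype A := Fintype.ofFinite A
  -- the quotient A ⧸ J is isomorphic to R ⧸ P
  have equot : (A ⧸ J) ≃+* R ⧸ P := DoubleQuot.quotQuotEquivQuotOfLE (Ideal.pow_le_self he)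
  haveI : Finite (A ⧸ J) := Quotient.finite _
  haveI : Finite (R ⧸ P) := Finite.of_equiv _ equot.toEquiv
  have hNA : Nat.card A = Nat.card J * Nat.card (A ⧸ J) :=
    Submodule.card_eq_card_quotient_mul_card (J : Submodule A A)
  have hq : Nat.card (A ⧸ J) = Nat.card (R ⧸ P) := Nat.card_congr equot.toEquiv
  -- count the non-primitive tuples
  have h1 : Nat.card {a : Fin k → A // Ideal.span (Set.range a) = ⊤}
      = Nat.card A ^ k - Nat.card J ^ k := by
    have e1 : {a : Fin k → A // Ideal.span (Set.range a) = ⊤}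
        ≃ {a : Fin k → A // ¬ ∀ j, a j ∈ J} :=
      Equiv.subtypeEquiv (Equiv.refl _) (fun a => span_eq_top_iff_pow P hP0 he a)
    have e2 : {a : Fin k → A // ∀ j, a j ∈ J} ≃ (Fin k → J) := Equiv.subtypePiEquivPi
    rw [Nat.card_congr e1]
    rw [Nat.card_eq_fintype_card, Fintype.card_subtype_compl]
    rw [← Nat.card_eq_fintype_card, ← Nat.card_eq_fintype_card, Nat.card_congr e2]
    simp [Nat.card_pi, Nat.card_fun]
  rw [h1]
  have hq0 : (0 : ℕ) < Nat.card (R ⧸ P) := Nat.card_pos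
  have hJ0 : (0 : ℕ) < Nat.card J := Nat.card_pos
  have hle : Nat.card J ^ k ≤ Nat.card A ^ k := by
    apply Nat.pow_le_pow_left
    rw [hNA]
    exact Nat.le_mul_of_pos_right _ (hq ▸ hq0)
  push_cast [hle]
  rw [hNA, hq]
  have hqQ : (Nat.card (R ⧸ P) : ℚ) ≠ 0 := by positivity
  field_simp
  push_cast
  ring

end aux

/-- In a Dedekind domain `R` with a nonzero ideal `I` of finite index, the number of
primitive `k`-tuples of `R ⧸ I` equals `N(I)^k · ∏_{P ∣ I} (1 - 1/N(P)^k)`, where the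
product runs over the prime ideals containing (i.e. dividing) `I` and `N` is the index. -/
theorem card_primitive_tuples_dedekind {R : Type*} [CommRing R] [IsDomain R]
    [IsDedekindDomain R] (I : Ideal R) (hI : I ≠ ⊥) [Finite (R ⧸ I)] (k : ℕ)
    (S : Finset (Ideal R)) (hS : ∀ P : Ideal R, P ∈ S ↔ P.IsPrime ∧ I ≤ P) :
    (Nat.card {a : Fin k → R ⧸ I // Ideal.span (Set.range a) = ⊤} : ℚ) =
      (Nat.card (R ⧸ I) : ℚ) ^ k * ∏ P ∈ S, (1 - 1 / (Nat.card (R ⧸ P) : ℚ) ^ k) := by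
  classical
  -- identify `S` with the finset of prime factors of `I`
  have hS' : S = (factors I).toFinset := by
    ext P
    rw [hS, Multiset.mem_toFinset]
    constructor
    · rintro ⟨hPp, hle⟩
      have hP0 : P ≠ ⊥ := fun h => hI (le_bot_iff.mp (h ▸ hle))
      have hprime : Prime P := Ideal.prime_of_isPrime hP0 hPp
      obtain ⟨Q, hQ, hassoc⟩ := exists_mem_factors_of_dvd hI hprime.irreducible
        (Ideal.dvd_iff_le.mpr hle)
      rwa [associated_iff_eq.mp hassoc]
    · intro hmem
      have hprime : Prime P := prime_of_factor P hmem
      exact ⟨Ideal.isPrime_of_prime hprime, Ideal.le_of_dvd (dvd_of_mem_factors hmem)⟩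
  subst hS'
  -- the CRT equivalence
  set f := IsDedekindDomain.quotientEquivPiFactors hI with hf
  haveI hfin : ∀ P : (factors I).toFinset,
      Finite (R ⧸ (P : Ideal R) ^ (Multiset.count (P : Ideal R) (factors I))) := by
    intro P
    have : Finite (∀ Q : (factors I).toFinset,
        R ⧸ (Q : Ideal R) ^ (Multiset.count (Q : Ideal R) (factors I))) :=
      Finite.of_equiv _ f.toEquiv
    exact Finite.of_surjective (fun g : (∀ Q : (factors I).toFinset,
        R ⧸ (Q : Ideal R) ^ (Multiset.count (Q : Ideal R) (factors I))) => g P)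
      (Function.surjective_eval P)
  -- transport the count through the equivalence
  have hcount : Nat.card {a : Fin k → R ⧸ I // Ideal.span (Set.range a) = ⊤}
      = ∏ P : (factors I).toFinset,
          Nat.card {b : Fin k → R ⧸ (P : Ideal R) ^ (Multiset.count (P : Ideal R) (factors I)) //
            Ideal.span (Set.range b) = ⊤} := by
    rw [← card_prim_pi]
    refine Nat.card_congr (Equiv.subtypeEquiv
      (Equiv.arrowCongr (Equiv.refl (Fin k)) f.toEquiv) ?_)
    intro a
    exact (span_range_comp_equiv_eq_top f a).symm
  have hcard : (Nat.card (R ⧸ I) : ℚ)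
      = ∏ P : (factors I).toFinset,
          (Nat.card (R ⧸ (P : Ideal R) ^ (Multiset.count (P : Ideal R) (factors I))) : ℚ) := by
    rw [← Nat.cast_prod, ← Nat.card_pi]
    exact congrArg _ (Nat.card_congr f.toEquiv)
  rw [hcount, hcard, Nat.cast_prod,
    ← Finset.prod_coe_sort ((factors I).toFinset) (fun P => (1 - 1 / (Nat.card (R ⧸ P) : ℚ) ^ k)),
    ← Finset.prod_pow, ← Finset.prod_mul_distrib]
  apply Finset.prod_congr rfl
  intro P _
  have hprime : Prime (P : Ideal R) := prime_of_factor _ (Multiset.mem_toFinset.mp P.prop)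
  haveI : (P : Ideal R).IsPrime := Ideal.isPrime_of_prime hprime
  have hP0 : (P : Ideal R) ≠ ⊥ := hprime.ne_zero
  have he : Multiset.count (P : Ideal R) (factors I) ≠ 0 := by
    rw [← Nat.pos_iff_ne_zero, Multiset.count_pos]
    exact Multiset.mem_toFinset.mp P.prop
  exact card_prim_pow (P : Ideal R) hP0 he k
end

section
/- Let R be a commutative unital ring. The Jordan totient J_{R,k} is multiplicative: if I and I' are ideals with I + I' = R, then J_{R,k}(I·I') = J_{R,k}(I) · J_{R,k}(I'). -/
lemma span_range_top_map_equiv {A B : Type*} [CommRing A] [CommRing B] {k : ℕ}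
    (e : A ≃+* B) (a : Fin k → A) :
    Ideal.span (Set.range a) = ⊤ ↔ Ideal.span (Set.range (⇑e ∘ a)) = ⊤ := by
  have hm : Ideal.span (Set.range (⇑e ∘ a)) = Ideal.map (e : A →+* B) (Ideal.span (Set.range a)) := by
    rw [Ideal.map_span, Set.range_comp]; rfl
  rw [hm]
  constructor
  · intro h; rw [h]; exact Ideal.map_top _
  · intro h
    have := congrArg (Ideal.comap (e : A →+* B)) h
    rwa [Ideal.comap_map_of_bijective (e : A →+* B) e.bijective, Ideal.comap_top] at this

lemma span_range_top_prod {S T : Type*} [CommRing S] [CommRing T] {k : ℕ}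
    (a : Fin k → S × T) :
    Ideal.span (Set.range a) = ⊤ ↔
      (Ideal.span (Set.range (fun i => (a i).1)) = ⊤ ∧
       Ideal.span (Set.range (fun i => (a i).2)) = ⊤) := by
  simp only [Ideal.eq_top_iff_one, Ideal.mem_span_range_iff_exists_fun]
  constructor
  · rintro ⟨c, hc⟩
    refine ⟨⟨fun i => (c i).1, ?_⟩, ⟨fun i => (c i).2, ?_⟩⟩
    · have := congrArg Prod.fst hc
      simpa [Prod.fst_sum] using this
    · have := congrArg Prod.snd hc
      simpa [Prod.snd_sum] using this
  · rintro ⟨⟨c, hc⟩, ⟨d, hd⟩⟩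
    refine ⟨fun i => (c i, d i), ?_⟩
    apply Prod.ext
    · simpa [Prod.fst_sum] using hc
    · simpa [Prod.snd_sum] using hd

/-- The Jordan totient `J_{R,k}(I)`, i.e. the number of primitive `k`-tuples of `R ⧸ I`,
is multiplicative on coprime ideals. -/
theorem jordan_totient_multiplicative {R : Type*} [CommRing R] (k : ℕ)
    (I I' : Ideal R) (h : I + I' = ⊤) :
    Nat.card {a : Fin k → R ⧸ (I * I') // Ideal.span (Set.range a) = ⊤} =
      Nat.card {a : Fin k → R ⧸ I // Ideal.span (Set.range a) = ⊤} *
      Nat.card {a : Fin k → R ⧸ I' // Ideal.span (Set.range a) = ⊤} := by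
  have hcop : IsCoprime I I' := by
    rw [Ideal.isCoprime_iff_sup_eq, ← Ideal.add_eq_sup]; exact h
  set e := Ideal.quotientMulEquivQuotientProd I I' hcop
  rw [← Nat.card_prod]
  apply Nat.card_congr
  refine
    { toFun := fun x =>
        (⟨fun i => (e (x.1 i)).1, ?_⟩, ⟨fun i => (e (x.1 i)).2, ?_⟩)
      invFun := fun p =>
        ⟨fun i => e.symm (p.1.1 i, p.2.1 i), ?_⟩
      left_inv := ?_
      right_inv := ?_ }
  · exact ((span_range_top_prod _).mp
      ((span_range_top_map_equiv e x.1).mp x.2)).1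
  · exact ((span_range_top_prod _).mp
      ((span_range_top_map_equiv e x.1).mp x.2)).2
  · rw [span_range_top_map_equiv e.symm.symm]
    apply (span_range_top_prod _).mpr
    constructor
    · convert p.1.2 using 2
      case e'_3 => ext i; simp
      all_goals rfl
    · convert p.2.2 using 2
      case e'_3 => ext i; simp
      all_goals rfl
  · rintro ⟨a, ha⟩; ext i; simp
  · rintro ⟨⟨b, hb⟩, ⟨c, hc⟩⟩; apply Prod.ext <;> ext i <;> simp
end

section
/- Let R be a Dedekind domain and I a nonzero ideal of finite index. Then the cardinality of projective m-space over R/I equals N(I)^m · ∏_{P | I} (1 + 1/N(P) + ⋯ + 1/N(P)^m), where P ranges over primes dividing I. -/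
/-- The scaling action of the units on primitive `(m+1)`-tuples of a commutative ring `A`;
naive projective `m`-space over `A` is the quotient by this setoid. -/
def primSetoid (A : Type*) [CommRing A] (m : ℕ) :
    Setoid {a : Fin (m + 1) → A // Ideal.span (Set.range a) = ⊤} where
  r a b := ∃ u : Aˣ, ∀ i, (u : A) * (a : Fin (m + 1) → A) i = (b : Fin (m + 1) → A) i
  iseqv := by
    constructor
    · intro a; exact ⟨1, fun i => by simp⟩
    · rintro a b ⟨u, h⟩
      exact ⟨u⁻¹, fun i => by rw [← h i, ← mul_assoc, Units.inv_mul, one_mul]⟩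
    · rintro a b c ⟨u, h⟩ ⟨v, h'⟩
      exact ⟨v * u, fun i => by rw [Units.val_mul, mul_assoc, h i, h' i]⟩

/-- Naive projective `m`-space over `A`: primitive `(m+1)`-tuples modulo unit scaling. -/
def NaiveProj (A : Type*) [CommRing A] (m : ℕ) := Quotient (primSetoid A m)

set_option maxHeartbeats 1000000

namespace ProjCount

variable {A : Type*} [CommRing A] {m : ℕ}

abbrev Prim (A : Type*) [CommRing A] (m : ℕ) := {a : Fin (m + 1) → A // Ideal.span (Set.range a) = ⊤}

lemma span_unit_mul (u : Aˣ) (a : Fin (m + 1) → A) :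
    Ideal.span (Set.range fun i => (u : A) * a i) = Ideal.span (Set.range a) := by
  apply le_antisymm <;> rw [Ideal.span_le] <;> rintro x ⟨i, rfl⟩
  · exact Ideal.mul_mem_left _ _ (Ideal.subset_span ⟨i, rfl⟩)
  · have : a i = (↑u⁻¹ : A) * ((u : A) * a i) := by
      rw [← mul_assoc, Units.inv_mul, one_mul]
    rw [this]
    exact Ideal.mul_mem_left _ _ (Ideal.subset_span ⟨i, rfl⟩)

instance : SMul Aˣ (Prim A m) where
  smul u a := ⟨fun i => (u : A) * a.1 i, by rw [span_unit_mul]; exact a.2⟩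

lemma smul_def (u : Aˣ) (a : Prim A m) : (u • a).1 = fun i => (u : A) * a.1 i := rfl

instance : MulAction Aˣ (Prim A m) where
  one_smul a := Subtype.ext <| funext fun i => by simp [smul_def]
  mul_smul u v a := Subtype.ext <| funext fun i => by simp [smul_def, mul_assoc]

lemma stabilizer_eq_bot (a : Prim A m) : MulAction.stabilizer Aˣ a = ⊥ := by
  rw [eq_bot_iff]
  intro u hu
  have h1 : (1 : A) ∈ Ideal.span (Set.range a.1) := by rw [a.2]; trivial
  obtain ⟨c, hc⟩ := Ideal.mem_span_range_iff_exists_fun.mp h1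
  have hai : ∀ i, (u : A) * a.1 i = a.1 i := fun i =>
    congrFun (congrArg Subtype.val (MulAction.mem_stabilizer_iff.mp hu)) i
  have : (u : A) = 1 := by
    calc (u : A) = (u : A) * 1 := (mul_one _).symm
    _ = ∑ i, c i * ((u : A) * a.1 i) := by rw [← hc, Finset.mul_sum]; congr 1; funext i; ring
    _ = ∑ i, c i * a.1 i := by simp_rw [hai]
    _ = 1 := hc
  exact Subgroup.mem_bot.mpr (Units.ext this)

noncomputable def naiveProjEquivOrbits :
    NaiveProj A m ≃ MulAction.orbitRel.Quotient Aˣ (Prim A m) :=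
  Quotient.congrRight fun a b => by
    rw [MulAction.orbitRel_apply, MulAction.mem_orbit_iff]
    constructor
    · rintro ⟨u, h⟩
      refine ⟨u⁻¹, Subtype.ext (funext fun i => ?_)⟩
      rw [smul_def]
      dsimp only
      rw [← h i, ← mul_assoc, Units.inv_mul, one_mul]
    · rintro ⟨u, h⟩
      refine ⟨u⁻¹, fun i => ?_⟩
      have := congrFun (congrArg Subtype.val h) i
      rw [smul_def] at this
      dsimp only at this
      rw [← this, ← mul_assoc, Units.inv_mul, one_mul]

noncomputable def quotStabEquiv (a : Prim A m) :
    (Aˣ ⧸ MulAction.stabilizer Aˣ a) ≃ Aˣ :=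
  ((QuotientGroup.quotientMulEquivOfEq (stabilizer_eq_bot a)).trans
    QuotientGroup.quotientBot).toEquiv

lemma card_naiveProj_mul_card_units [Finite A] :
    Nat.card (NaiveProj A m) * Nat.card Aˣ = Nat.card (Prim A m) := by
  classical
  set Ω := MulAction.orbitRel.Quotient Aˣ (Prim A m) with hΩ
  have e1 : Prim A m ≃ Σ ω : Ω, Aˣ ⧸ MulAction.stabilizer Aˣ ω.out :=
    MulAction.selfEquivSigmaOrbitsQuotientStabilizer Aˣ (Prim A m)
  have e3 : (Σ ω : Ω, Aˣ ⧸ MulAction.stabilizer Aˣ ω.out) ≃ Σ _ : Ω, Aˣ :=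
    Equiv.sigmaCongrRight fun ω => quotStabEquiv ω.out
  have e4 : (Σ _ : Ω, Aˣ) ≃ Ω × Aˣ := Equiv.sigmaEquivProd _ _
  have h1 : Nat.card (Prim A m) = Nat.card Ω * Nat.card Aˣ := by
    rw [Nat.card_congr ((e1.trans e3).trans e4), Nat.card_prod]
  have h2 : Nat.card (NaiveProj A m) = Nat.card Ω :=
    Nat.card_congr (naiveProjEquivOrbits (A := A) (m := m))
  rw [h1, h2]

section Local

variable {A : Type*} [CommRing A] {m : ℕ} (M : Ideal A)

/-- units of a comm ring are equiv to the subtype of unit elements -/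
noncomputable def unitsEquivIsUnit : Aˣ ≃ {x : A // IsUnit x} where
  toFun u := ⟨u, u.isUnit⟩
  invFun x := x.2.unit
  left_inv u := Units.ext rfl
  right_inv x := Subtype.ext x.2.unit_spec

lemma card_units_add_card_ideal [Finite A]
    (hloc : ∀ x : A, ¬IsUnit x → x ∈ M) (hM : M ≠ ⊤) :
    Nat.card Aˣ + Nat.card M = Nat.card A := by
  classical
  have hiff : ∀ x : A, IsUnit x ↔ x ∉ M := by
    intro x
    constructor
    · intro hx hxM
      exact hM (M.eq_top_of_isUnit_mem hxM hx)
    · intro hx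
      by_contra h
      exact hx (hloc x h)
  cases nonempty_fintype A
  have h1 : Nat.card Aˣ = Nat.card {x : A // x ∉ M} :=
    Nat.card_congr ((unitsEquivIsUnit (A := A)).trans (Equiv.subtypeEquivRight hiff))
  have h2 : Nat.card M = Nat.card {x : A // x ∈ M} := rfl
  have h3 : Nat.card {x : A // x ∉ M} + Nat.card {x : A // x ∈ M} = Nat.card A := by
    simp only [Nat.card_eq_fintype_card]
    rw [Fintype.card_subtype_compl]
    have := Fintype.card_subtype_le (fun x : A => x ∈ M)
    omega
  rw [h1, h2]
  exact h3

lemma card_prim_add [Finite A]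
    (hloc : ∀ x : A, ¬IsUnit x → x ∈ M) (hM : M ≠ ⊤) (m : ℕ) :
    Nat.card (ProjCount.Prim A m) + Nat.card M ^ (m + 1) = Nat.card A ^ (m + 1) := by
  classical
  cases nonempty_fintype A
  have key : ∀ a : Fin (m + 1) → A, ¬ (Ideal.span (Set.range a) = ⊤) ↔ ∀ i, a i ∈ M := by
    intro a
    constructor
    · intro h i
      by_contra hi
      have : IsUnit (a i) := by
        by_contra hu
        exact hi (hloc _ hu)
      exact h (Ideal.eq_top_of_isUnit_mem _ (Ideal.subset_span ⟨i, rfl⟩) this)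
    · intro h htop
      apply hM
      rw [eq_top_iff, ← htop, Ideal.span_le]
      rintro x ⟨i, rfl⟩
      exact h i
  have e1 : {a : Fin (m + 1) → A // ¬ (Ideal.span (Set.range a) = ⊤)} ≃ (Fin (m + 1) → M) :=
    (Equiv.subtypeEquivRight key).trans
      { toFun := fun a i => ⟨a.1 i, a.2 i⟩
        invFun := fun b => ⟨fun i => b i, fun i => (b i).2⟩
        left_inv := fun a => Subtype.ext rfl
        right_inv := fun b => rfl }
  have h1 : Nat.card {a : Fin (m + 1) → A // ¬ (Ideal.span (Set.range a) = ⊤)}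
      = Nat.card M ^ (m + 1) := by
    rw [Nat.card_congr e1, Nat.card_fun]
    congr 1
    simp [Nat.card_eq_fintype_card]
  have h2 : Nat.card {a : Fin (m + 1) → A // Ideal.span (Set.range a) = ⊤} +
      Nat.card {a : Fin (m + 1) → A // ¬ (Ideal.span (Set.range a) = ⊤)}
      = Nat.card (Fin (m + 1) → A) := by
    simp only [Nat.card_eq_fintype_card]
    rw [add_comm, Fintype.card_subtype_compl]
    have := Fintype.card_subtype_le (fun a : Fin (m + 1) → A => Ideal.span (Set.range a) = ⊤)
    omega
  have h4 : Nat.card (Fin (m + 1) → A) = Nat.card A ^ (m + 1) := by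
    rw [Nat.card_fun]
    congr 1
    simp [Nat.card_eq_fintype_card]
  rw [h1, h4] at h2
  exact h2

open Finset in
lemma card_naiveProj_local {A : Type*} [CommRing A] [Finite A] (M : Ideal A)
    (hloc : ∀ x : A, ¬IsUnit x → x ∈ M) (hM : M ≠ ⊤) (m : ℕ) :
    (Nat.card (NaiveProj A m) : ℚ) =
      (Nat.card A : ℚ) ^ m * ∑ j ∈ range (m + 1), 1 / (Nat.card (A ⧸ M) : ℚ) ^ j := by
  classical
  set a : ℚ := (Nat.card A : ℚ) with ha
  set k : ℚ := (Nat.card M : ℚ) with hk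
  set q : ℚ := (Nat.card (A ⧸ M) : ℚ) with hq
  have hk0 : (Nat.card M) ≠ 0 := Nat.card_ne_zero.mpr ⟨⟨0, M.zero_mem⟩, inferInstance⟩
  have hq0 : (Nat.card (A ⧸ M)) ≠ 0 := Nat.card_ne_zero.mpr ⟨⟨0⟩, Finite.of_surjective _ Ideal.Quotient.mk_surjective⟩
  have hu0 : (Nat.card Aˣ) ≠ 0 := Nat.card_ne_zero.mpr ⟨⟨1⟩, inferInstance⟩
  have haqk : a = q * k := by
    have h := Submodule.card_eq_card_quotient_mul_card M
    rw [ha, hq, hk, h]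
    push_cast
    ring


  have hkQ : k ≠ 0 := by rw [hk]; exact Nat.cast_ne_zero.mpr hk0
  have hqQ : q ≠ 0 := by rw [hq]; exact Nat.cast_ne_zero.mpr hq0
  have haQ : a ≠ 0 := by rw [haqk]; exact mul_ne_zero hqQ hkQ
  have husub : (Nat.card Aˣ : ℚ) = a - k := by
    have := card_units_add_card_ideal M hloc hM
    have : ((Nat.card Aˣ : ℕ) : ℚ) + k = a := by rw [hk, ha, ← Nat.cast_add, this]
    linarith
  have hpsub : (Nat.card (ProjCount.Prim A m) : ℚ) = a ^ (m + 1) - k ^ (m + 1) := by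
    have := card_prim_add M hloc hM m
    have : (Nat.card (ProjCount.Prim A m) : ℚ) + k ^ (m + 1) = a ^ (m + 1) := by
      rw [hk, ha, ← Nat.cast_pow, ← Nat.cast_pow, ← Nat.cast_add, this]
    linarith
  have hmain : (Nat.card (NaiveProj A m) : ℚ) * (Nat.card Aˣ : ℚ)
      = a ^ (m + 1) - k ^ (m + 1) := by
    rw [← hpsub, ← Nat.cast_mul, ProjCount.card_naiveProj_mul_card_units]
  have hgeom : (∑ i ∈ range (m + 1), k ^ i * a ^ (m - i)) * (a - k)
      = a ^ (m + 1) - k ^ (m + 1) := by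
    have h := geom_sum₂_mul k a (m + 1)
    simp only [Nat.add_sub_cancel] at h
    nlinarith [h]
  have hune : a - k ≠ 0 := by rw [← husub]; exact_mod_cast hu0
  have hn : (Nat.card (NaiveProj A m) : ℚ) = ∑ i ∈ range (m + 1), k ^ i * a ^ (m - i) := by
    have h2 := hmain
    rw [husub] at h2
    exact mul_right_cancel₀ hune (h2.trans hgeom.symm)
  rw [hn]
  rw [Finset.mul_sum]
  apply Finset.sum_congr rfl
  intro i hi
  have him : i ≤ m := Nat.lt_succ_iff.mp (Finset.mem_range.mp hi)
  rw [mul_one_div, eq_div_iff (pow_ne_zero _ hqQ)]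
  calc k ^ i * a ^ (m - i) * q ^ i = a ^ (m - i) * (q * k) ^ i := by rw [mul_pow]; ring
  _ = a ^ (m - i) * a ^ i := by rw [← haqk]
  _ = a ^ m := by rw [← pow_add, Nat.sub_add_cancel him]

end Local

section Transfer

variable {m : ℕ}

def primEquivOfRingEquiv {A B : Type*} [CommRing A] [CommRing B] (e : A ≃+* B) :
    ProjCount.Prim A m ≃ ProjCount.Prim B m where
  toFun a := ⟨fun i => e (a.1 i), by
    have h : Set.range (fun i => e (a.1 i)) = ⇑e '' Set.range a.1 :=
      (Set.range_comp (⇑e) a.1).symm ▸ rfl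
    rw [h, ← Ideal.map_span, a.2, Ideal.map_top]⟩
  invFun b := ⟨fun i => e.symm (b.1 i), by
    have h : Set.range (fun i => e.symm (b.1 i)) = ⇑e.symm '' Set.range b.1 :=
      (Set.range_comp (⇑e.symm) b.1).symm ▸ rfl
    rw [h, ← Ideal.map_span, b.2, Ideal.map_top]⟩
  left_inv a := Subtype.ext (funext fun i => e.symm_apply_apply _)
  right_inv b := Subtype.ext (funext fun i => e.apply_symm_apply _)

def unitsPiEquiv {ι : Type*} (A : ι → Type*) [∀ i, CommRing (A i)] :
    (∀ i, A i)ˣ ≃ ∀ i, (A i)ˣ where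
  toFun u i := ⟨u.1 i, u⁻¹.1 i, congrFun u.val_inv i, congrFun u.inv_val i⟩
  invFun v := ⟨fun i => v i, fun i => (((v i)⁻¹ : (A i)ˣ) : A i),
    funext fun i => (v i).val_inv, funext fun i => (v i).inv_val⟩
  left_inv u := Units.ext rfl
  right_inv v := funext fun i => Units.ext rfl

lemma span_pi_top_iff {ι : Type*} {A : ι → Type*} [∀ i, CommRing (A i)]
    (a : Fin (m + 1) → ∀ i, A i) :
    Ideal.span (Set.range a) = ⊤ ↔ ∀ i, Ideal.span (Set.range fun j => a j i) = ⊤ := by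
  simp only [Ideal.eq_top_iff_one, Ideal.mem_span_range_iff_exists_fun]
  constructor
  · rintro ⟨c, hc⟩ i
    refine ⟨fun j => c j i, ?_⟩
    have := congrFun hc i
    simpa [Finset.sum_apply] using this
  · intro h
    choose c hc using h
    refine ⟨fun j i => c i j, funext fun i => ?_⟩
    simpa [Finset.sum_apply] using hc i

def primPiEquiv {ι : Type*} (A : ι → Type*) [∀ i, CommRing (A i)] :
    ProjCount.Prim (∀ i, A i) m ≃ ∀ i, ProjCount.Prim (A i) m where
  toFun a i := ⟨fun j => a.1 j i, (span_pi_top_iff a.1).mp a.2 i⟩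
  invFun b := ⟨fun j i => (b i).1 j, (span_pi_top_iff _).mpr fun i => (b i).2⟩
  left_inv a := Subtype.ext rfl
  right_inv b := funext fun i => Subtype.ext rfl

end Transfer

end ProjCount

open ProjCount UniqueFactorizationMonoid in
/-- For a Dedekind domain `R` and a nonzero ideal `I` of finite index, the cardinality of
projective `m`-space over `R ⧸ I` is `N(I)^m · ∏_{P ∣ I} (1 + 1/N(P) + ⋯ + 1/N(P)^m)`. -/
theorem card_proj_space_quotient_dedekind {R : Type*} [CommRing R] [IsDomain R]
    [IsDedekindDomain R] (I : Ideal R) (hI : I ≠ ⊥) [Finite (R ⧸ I)] (m : ℕ)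
    (S : Finset (Ideal R)) (hS : ∀ P : Ideal R, P ∈ S ↔ P.IsPrime ∧ I ≤ P) :
    (Nat.card (NaiveProj (R ⧸ I) m) : ℚ) =
      (Nat.card (R ⧸ I) : ℚ) ^ m *
        ∏ P ∈ S, ∑ j ∈ Finset.range (m + 1), 1 / (Nat.card (R ⧸ P) : ℚ) ^ j := by
  classical
  have hI0 : I ≠ 0 := hI
  have hSeq : S = (normalizedFactors I).toFinset := by
    ext P
    rw [hS P, Multiset.mem_toFinset, Ideal.mem_normalizedFactors_iff hI]
  set e : Ideal R → ℕ := fun P => (normalizedFactors I).count P with he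
  have hprime : ∀ P ∈ S, Prime P := by
    intro P hP
    obtain ⟨h1, h2⟩ := (hS P).mp hP
    have hPbot : P ≠ ⊥ := fun h => hI (le_bot_iff.mp (h ▸ h2))
    exact (Ideal.prime_iff_isPrime hPbot).mpr h1
  have hprod : ∏ P ∈ S, P ^ e P = I := by
    rw [hSeq, he, ← Finset.prod_multiset_count]
    exact associated_iff_eq.mp (prod_normalizedFactors hI0)
  have hcnt : ∀ P ∈ S, e P ≠ 0 := by
    intro P hP
    have : P ∈ normalizedFactors I := Multiset.mem_toFinset.mp (hSeq ▸ hP)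
    have := Multiset.count_pos.mpr this
    simp only [he]
    omega
  have hle : ∀ P ∈ S, I ≤ P ^ e P := by
    intro P hP
    exact Ideal.le_of_dvd (hprod ▸ Finset.dvd_prod_of_mem (fun P => P ^ e P) hP)
  -- CRT equivalence
  have crt : R ⧸ I ≃+* ∀ P : S, R ⧸ (id (P : Ideal R)) ^ e (P : Ideal R) :=
    IsDedekindDomain.quotientEquivPiOfFinsetProdEq I id e
      (fun P hP => hprime P hP) (fun i _ j _ h => h) (by simpa using hprod)
  haveI hfin : ∀ P : S, Finite (R ⧸ ((P : Ideal R) ^ e (P : Ideal R))) := by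
    intro P
    exact Finite.of_surjective (Ideal.Quotient.factor (hle P P.2))
      (fun x => by
        obtain ⟨r, rfl⟩ := Ideal.Quotient.mk_surjective x
        exact ⟨Ideal.Quotient.mk I r, Ideal.Quotient.factor_mk _ r⟩)
  -- local data for each P ∈ S
  have key : ∀ P : S, (Nat.card (NaiveProj (R ⧸ ((P : Ideal R) ^ e (P : Ideal R))) m) : ℚ) =
      (Nat.card (R ⧸ ((P : Ideal R) ^ e (P : Ideal R))) : ℚ) ^ m *
        ∑ j ∈ Finset.range (m + 1), 1 / (Nat.card (R ⧸ (P : Ideal R)) : ℚ) ^ j := by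
    rintro ⟨P, hP⟩
    obtain ⟨hPpr, hPle⟩ := (hS P).mp hP
    have hPbot : P ≠ ⊥ := fun h => hI (le_bot_iff.mp (h ▸ hPle))
    have hPmax : P.IsMaximal := hPpr.isMaximal hPbot
    have hPee : P ^ e P ≤ P := Ideal.pow_le_self (hcnt P hP)
    set MP : Ideal (R ⧸ (P ^ e P)) := Ideal.map (Ideal.Quotient.mk (P ^ e P)) P with hMP
    have hMPtop : MP ≠ ⊤ := by
      intro h
      have h1 : (Ideal.Quotient.mk (P ^ e P)) 1 ∈ MP := by rw [h]; trivial
      exact hPmax.ne_top (Ideal.eq_top_iff_one P |>.mpr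
        ((Ideal.mem_quotient_iff_mem hPee).mp h1))
    have hloc : ∀ x : R ⧸ (P ^ e P), ¬IsUnit x → x ∈ MP := by
      intro x hx
      obtain ⟨r, rfl⟩ := Ideal.Quotient.mk_surjective x
      have hsp : Ideal.span {Ideal.Quotient.mk (P ^ e P) r} ≠ ⊤ :=
        fun h => hx (Ideal.span_singleton_eq_top.mp h)
      obtain ⟨Q', hQ'max, hQ'le⟩ := Ideal.exists_le_maximal _ hsp
      haveI hQprime : (Q'.comap (Ideal.Quotient.mk (P ^ e P))).IsPrime :=
        Ideal.comap_isPrime _ _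
      have hpow : P ^ e P ≤ Q'.comap (Ideal.Quotient.mk (P ^ e P)) := by
        intro y hy
        show Ideal.Quotient.mk (P ^ e P) y ∈ Q'
        rw [Ideal.Quotient.eq_zero_iff_mem.mpr hy]
        exact Q'.zero_mem
      have hPQ : P ≤ Q'.comap (Ideal.Quotient.mk (P ^ e P)) :=
        Ideal.IsPrime.le_of_pow_le hpow
      have hQP : P = Q'.comap (Ideal.Quotient.mk (P ^ e P)) :=
        hPmax.eq_of_le hQprime.ne_top hPQ
      have hr : r ∈ P := by
        rw [hQP]
        exact hQ'le (Ideal.subset_span rfl)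
      exact (Ideal.mem_quotient_iff_mem hPee).mpr hr
    have hres : Nat.card ((R ⧸ (P ^ e P)) ⧸ MP) = Nat.card (R ⧸ P) :=
      Nat.card_congr (DoubleQuot.quotQuotEquivQuotOfLE hPee).toEquiv
    haveI : Finite (R ⧸ (P ^ e P)) := hfin ⟨P, hP⟩
    have := card_naiveProj_local MP hloc hMPtop m
    rw [hres] at this
    exact this
  -- global counting
  set B := fun P : S => R ⧸ ((P : Ideal R) ^ e (P : Ideal R)) with hB
  have hcardA : Nat.card (R ⧸ I) = ∏ P : S, Nat.card (B P) := by
    rw [Nat.card_congr crt.toEquiv, Nat.card_pi]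
    rfl
  have hcardPrim : Nat.card (ProjCount.Prim (R ⧸ I) m) =
      ∏ P : S, Nat.card (ProjCount.Prim (B P) m) := by
    rw [Nat.card_congr ((primEquivOfRingEquiv crt).trans (primPiEquiv B)), Nat.card_pi]
  have hcardUnits : Nat.card (R ⧸ I)ˣ = ∏ P : S, Nat.card (B P)ˣ := by
    rw [Nat.card_congr ((Units.mapEquiv crt.toMulEquiv).toEquiv.trans (unitsPiEquiv B)),
      Nat.card_pi]
  have hglob := ProjCount.card_naiveProj_mul_card_units (A := R ⧸ I) (m := m)
  have hlocmul : ∀ P : S, Nat.card (NaiveProj (B P) m) * Nat.card (B P)ˣ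
      = Nat.card (ProjCount.Prim (B P) m) := fun P =>
    ProjCount.card_naiveProj_mul_card_units (A := B P) (m := m)
  have huP : ∀ P : S, (Nat.card (B P)ˣ : ℚ) ≠ 0 := fun P =>
    Nat.cast_ne_zero.mpr (Nat.card_ne_zero.mpr ⟨⟨1⟩, inferInstance⟩)
  have hprodu : (∏ P : S, (Nat.card (B P)ˣ : ℚ)) ≠ 0 :=
    Finset.prod_ne_zero_iff.mpr fun P _ => huP P
  have hN : Nat.card (NaiveProj (R ⧸ I) m) * ∏ P : S, Nat.card (B P)ˣ
      = ∏ P : S, Nat.card (ProjCount.Prim (B P) m) := by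
    rw [← hcardUnits, hglob, hcardPrim]
  have h2 : ∏ P : S, Nat.card (ProjCount.Prim (B P) m)
      = ∏ P : S, (Nat.card (NaiveProj (B P) m) * Nat.card (B P)ˣ) :=
    Finset.prod_congr rfl fun P _ => (hlocmul P).symm
  have h3 : Nat.card (NaiveProj (R ⧸ I) m) * ∏ P : S, Nat.card (B P)ˣ
      = (∏ P : S, Nat.card (NaiveProj (B P) m)) * ∏ P : S, Nat.card (B P)ˣ := by
    rw [hN, h2, Finset.prod_mul_distrib]
  have hupos : 0 < ∏ P : S, Nat.card (B P)ˣ :=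
    Finset.prod_pos fun P _ => Nat.card_pos
  have hnI : Nat.card (NaiveProj (R ⧸ I) m) = ∏ P : S, Nat.card (NaiveProj (B P) m) :=
    Nat.eq_of_mul_eq_mul_right hupos h3
  calc (Nat.card (NaiveProj (R ⧸ I) m) : ℚ)
      = ∏ P : S, (Nat.card (NaiveProj (B P) m) : ℚ) := by rw [hnI]; push_cast; rfl
    _ = ∏ P : S, ((Nat.card (B P) : ℚ) ^ m *
        ∑ j ∈ Finset.range (m + 1), 1 / (Nat.card (R ⧸ (P : Ideal R)) : ℚ) ^ j) :=
      Finset.prod_congr rfl fun P _ => key P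
    _ = (∏ P : S, (Nat.card (B P) : ℚ)) ^ m *
        ∏ P : S, ∑ j ∈ Finset.range (m + 1), 1 / (Nat.card (R ⧸ (P : Ideal R)) : ℚ) ^ j := by
      rw [Finset.prod_mul_distrib, Finset.prod_pow]
    _ = (Nat.card (R ⧸ I) : ℚ) ^ m *
        ∏ P : S, ∑ j ∈ Finset.range (m + 1), 1 / (Nat.card (R ⧸ (P : Ideal R)) : ℚ) ^ j := by
      rw [hcardA]; push_cast; rfl
    _ = (Nat.card (R ⧸ I) : ℚ) ^ m *
        ∏ P ∈ S, ∑ j ∈ Finset.range (m + 1), 1 / (Nat.card (R ⧸ P) : ℚ) ^ j := by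
      rw [Finset.prod_coe_sort S
        (fun P => ∑ j ∈ Finset.range (m + 1), 1 / (Nat.card (R ⧸ P) : ℚ) ^ j)]
end

section
/- Let F₀,…,F_M be homogeneous forms of degree d ≥ 0 in variables X₀,…,X_m over a field K with no nontrivial common zero over the algebraic closure. Then there exists an integer e ≥ 0 and homogeneous forms G_{ij} of degree e - d over K such that Σ_{j=0}^{M} G_{ij}·F_j = X_i^e for all i = 0,…,m. -/
noncomputable section PseudoinverseAux

open MvPolynomial

namespace PseudoinverseAux

variable {K L : Type*} [Field K] [Field L] [Algebra K L] {σ : Type*}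

lemma exists_pi : ∃ π : L →ₗ[K] K, π 1 = 1 := by
  have h1 : LinearIndepOn K id ({1} : Set L) :=
    .singleton one_ne_zero
  have h1m : (1 : L) ∈ h1.extend (Set.subset_univ _) := h1.subset_extend _ rfl
  refine ⟨(Module.Basis.extend h1).coord ⟨1, h1m⟩, ?_⟩
  have hB : Module.Basis.extend h1 ⟨1, h1m⟩ = 1 := Module.Basis.extend_apply_self h1 _
  have h2 : ((Module.Basis.extend h1).coord ⟨1, h1m⟩) ((Module.Basis.extend h1) ⟨1, h1m⟩) = 1 := by
    rw [Module.Basis.coord_apply, Module.Basis.repr_self, Finsupp.single_eq_same]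
  rwa [hB] at h2

lemma pi_alg (π : L →ₗ[K] K) (hπ : π 1 = 1) (k : K) : π (algebraMap K L k) = k := by
  rw [Algebra.algebraMap_eq_smul_one, map_smul, hπ, smul_eq_mul, mul_one]

lemma pi_mul_alg (π : L →ₗ[K] K) (x : L) (k : K) :
    π (x * algebraMap K L k) = π x * k := by
  rw [mul_comm, ← Algebra.smul_def, map_smul, smul_eq_mul, mul_comm]

/-- Coefficientwise application of a `K`-linear functional `L →ₗ[K] K`. -/
def descend (π : L →ₗ[K] K) (q : MvPolynomial σ L) : MvPolynomial σ K :=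
  ∑ u ∈ q.support, monomial u (π (coeff u q))

lemma coeff_descend (π : L →ₗ[K] K) (q : MvPolynomial σ L) (d : σ →₀ ℕ) :
    coeff d (descend π q) = π (coeff d q) := by
  classical
  rw [descend, coeff_sum]
  simp only [coeff_monomial]
  rw [Finset.sum_ite_eq']
  split
  · rfl
  · next h => rw [notMem_support_iff.mp h, map_zero]

lemma descend_eq {ι : Type*} [Fintype ι] (π : L →ₗ[K] K) (hπ : π 1 = 1)
    (F : ι → MvPolynomial σ K) (c : ι → MvPolynomial σ L) (p : MvPolynomial σ K)
    (h : ∑ j, c j * (MvPolynomial.map (algebraMap K L)) (F j)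
       = MvPolynomial.map (algebraMap K L) p) :
    ∑ j, descend π (c j) * F j = p := by
  classical
  ext d
  have key : π (coeff d (∑ j, c j * (MvPolynomial.map (algebraMap K L)) (F j)))
      = ∑ j, ∑ x ∈ Finset.HasAntidiagonal.antidiagonal d, π (coeff x.1 (c j)) * coeff x.2 (F j) := by
    rw [coeff_sum, map_sum]
    refine Finset.sum_congr rfl fun j _ => ?_
    rw [coeff_mul, map_sum]
    refine Finset.sum_congr rfl fun x _ => ?_
    rw [coeff_map, pi_mul_alg]
  rw [h, coeff_map, pi_alg π hπ] at key
  rw [coeff_sum, key]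
  refine Finset.sum_congr rfl fun j _ => ?_
  rw [coeff_mul]
  exact Finset.sum_congr rfl fun x _ => by rw [coeff_descend]

lemma degree_add (a b : σ →₀ ℕ) : (a + b).degree = a.degree + b.degree := by
  simp only [Finsupp.degree_eq_weight_one, map_add]

lemma homogeneousComponent_mul_right {F c : MvPolynomial σ K} {d e : ℕ}
    (hF : F.IsHomogeneous d) (hde : d ≤ e) :
    homogeneousComponent e (c * F) = homogeneousComponent (e - d) c * F := by
  classical
  ext μ
  rw [coeff_homogeneousComponent, coeff_mul, coeff_mul]
  have hterm : ∀ x ∈ Finset.HasAntidiagonal.antidiagonal μ,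
      coeff x.1 (homogeneousComponent (e - d) c) * coeff x.2 F
        = if x.1.degree = e - d then coeff x.1 c * coeff x.2 F else 0 := by
    intro x _
    rw [coeff_homogeneousComponent]
    split <;> simp
  rw [Finset.sum_congr rfl hterm]
  split
  · next hμ =>
    refine Finset.sum_congr rfl fun x hx => ?_
    rcases eq_or_ne (coeff x.2 F) 0 with h2 | h2
    · rw [h2, mul_zero]; split <;> rfl
    · have hdeg2 : x.2.degree = d := by
        by_contra hne
        exact h2 (hF.coeff_eq_zero hne)
      have hsum : x.1.degree + x.2.degree = e := by
        rw [← degree_add, Finset.HasAntidiagonal.mem_antidiagonal.mp hx, hμ]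
      have : x.1.degree = e - d := by omega
      rw [if_pos this]
  · next hμ =>
    refine (Finset.sum_eq_zero fun x hx => ?_).symm
    rcases eq_or_ne (coeff x.2 F) 0 with h2 | h2
    · rw [h2, mul_zero]; split <;> rfl
    · have hdeg2 : x.2.degree = d := by
        by_contra hne
        exact h2 (hF.coeff_eq_zero hne)
      have hsum : x.1.degree + x.2.degree = μ.degree := by
        rw [← degree_add, Finset.HasAntidiagonal.mem_antidiagonal.mp hx]
      rw [if_neg (by omega)]

end PseudoinverseAux

end PseudoinverseAux

/-- Existence of a pseudoinverse: if the homogeneous degree-`d` forms `F₀, …, F_M` have no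
nontrivial common zero over the algebraic closure, then there are an integer `e ≥ 0` and
homogeneous forms `G_{ij}` of degree `e - d` with `∑_j G_{ij}·F_j = X_i^e` for all `i`. -/
theorem exists_pseudoinverse {K : Type*} [Field K] (m M d : ℕ)
    (F : Fin (M + 1) → MvPolynomial (Fin (m + 1)) K)
    (hF : ∀ j, (F j).IsHomogeneous d)
    (hz : ∀ x : Fin (m + 1) → AlgebraicClosure K,
      (∀ j, MvPolynomial.aeval x (F j) = 0) → x = 0) :
    ∃ (e : ℕ) (G : Fin (m + 1) → Fin (M + 1) → MvPolynomial (Fin (m + 1)) K),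
      (∀ i j, (G i j).IsHomogeneous (e - d)) ∧
      ∀ i, ∑ j, G i j * F j = MvPolynomial.X i ^ e := by
  classical
  open MvPolynomial PseudoinverseAux in
  set L := AlgebraicClosure K
  set φ : MvPolynomial (Fin (m + 1)) K →+* MvPolynomial (Fin (m + 1)) L :=
    (MvPolynomial.map (algebraMap K L)) with hφdef
  set I : Ideal (MvPolynomial (Fin (m + 1)) L) :=
    Ideal.span (Set.range fun j => φ (F j)) with hIdef
  have hX : ∀ i, (MvPolynomial.X i : MvPolynomial (Fin (m + 1)) L) ∈ I.radical := by
    intro i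
    rw [← MvPolynomial.vanishingIdeal_zeroLocus_eq_radical (K := L)]
    rw [MvPolynomial.mem_vanishingIdeal_iff]
    intro x hx
    have hx0 : x = 0 := by
      refine hz x fun j => ?_
      have hmem : φ (F j) ∈ I := Ideal.subset_span ⟨j, rfl⟩
      have := hx (φ (F j)) hmem
      rwa [hφdef, MvPolynomial.aeval_map_algebraMap] at this
    rw [MvPolynomial.aeval_X, hx0]
    rfl
  have hXn : ∀ i, ∃ n, (MvPolynomial.X i : MvPolynomial (Fin (m + 1)) L) ^ n ∈ I :=
    fun i => Ideal.mem_radical_iff.mp (hX i)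
  choose n hn using hXn
  set e : ℕ := d + ∑ i, n i with hedef
  have hde : d ≤ e := Nat.le_add_right _ _
  have hni : ∀ i, n i ≤ e := fun i =>
    le_trans (Finset.single_le_sum (fun _ _ => Nat.zero_le _) (Finset.mem_univ i))
      (Nat.le_add_left _ _)
  have hXe : ∀ i, (MvPolynomial.X i : MvPolynomial (Fin (m + 1)) L) ^ e ∈ I := by
    intro i
    have : (MvPolynomial.X i : MvPolynomial (Fin (m + 1)) L) ^ e
        = MvPolynomial.X i ^ (e - n i) * MvPolynomial.X i ^ n i := by
      rw [← pow_add, Nat.sub_add_cancel (hni i)]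
    rw [this]
    exact Ideal.mul_mem_left _ _ (hn i)
  have hXe' : ∀ i, ∃ c : Fin (M + 1) → MvPolynomial (Fin (m + 1)) L,
      ∑ j, c j * φ (F j) = MvPolynomial.X i ^ e :=
    fun i => (Ideal.mem_span_range_iff_exists_fun).mp (hXe i)
  choose c hc using hXe'
  obtain ⟨π, hπ⟩ := exists_pi (K := K) (L := L)
  have hb : ∀ i, ∑ j, descend π (c i j) * F j = MvPolynomial.X i ^ e := by
    intro i
    refine descend_eq π hπ F (c i) (MvPolynomial.X i ^ e) ?_
    rw [map_pow, MvPolynomial.map_X, hc i]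
  refine ⟨e, fun i j => MvPolynomial.homogeneousComponent (e - d) (descend π (c i j)),
    fun i j => MvPolynomial.homogeneousComponent_isHomogeneous _ _, fun i => ?_⟩
  have hcomp : ∑ j, MvPolynomial.homogeneousComponent (e - d) (descend π (c i j)) * F j
      = MvPolynomial.homogeneousComponent e (∑ j, descend π (c i j) * F j) := by
    rw [map_sum]
    exact Finset.sum_congr rfl fun j _ =>
      (homogeneousComponent_mul_right (hF j) hde).symm
  rw [hcomp, hb i, MvPolynomial.homogeneousComponent_of_mem
    ((MvPolynomial.mem_homogeneousSubmodule _ _).mpr (MvPolynomial.isHomogeneous_X_pow _ _)),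
    if_pos rfl]
end

section
/- Let K be a field with discrete valuation v and let f : P^m → P^M be a morphism of degree d over K with lift F. Define the excess valuation ε_f(x) = v(F(x)) - d·v(x) - v(F) for x ∈ K^{m+1} \ {0}. Then ε_f is independent of the choice of lift F, invariant under scaling x by K^×, non-negative, and bounded above: ε_f(x) ≤ -(v(F) + v(G)) for any pseudoinverse G of F. -/
/-- The valuation of a tuple: the minimum valuation of its entries. -/
noncomputable def vTup {K : Type*} [Field K] {k : ℕ} (v : AddValuation K (WithTop ℤ))
    (x : Fin k → K) : WithTop ℤ :=
  Finset.univ.inf fun i => v (x i)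

/-- The valuation of a polynomial: the minimum valuation of its coefficients. -/
noncomputable def vPoly {K : Type*} [Field K] {σ : Type*} (v : AddValuation K (WithTop ℤ))
    (p : MvPolynomial σ K) : WithTop ℤ :=
  p.support.inf fun s => v (MvPolynomial.coeff s p)

/-- The valuation of a system of polynomials: the minimum valuation of all coefficients. -/
noncomputable def vSys {K : Type*} [Field K] {k : ℕ} {σ : Type*}
    (v : AddValuation K (WithTop ℤ)) (F : Fin k → MvPolynomial σ K) : WithTop ℤ :=
  Finset.univ.inf fun j => vPoly v (F j)

open MvPolynomial Finset in
/-- Adding a constant commutes with a finite `inf` in `WithTop ℤ`. -/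
lemma infAddConst {ι : Type*} (s : Finset ι) (c : WithTop ℤ) (f : ι → WithTop ℤ) :
    s.inf (fun i => c + f i) = c + s.inf f := by
  rcases s.eq_empty_or_nonempty with rfl | hs
  · simp
  · obtain ⟨i0, hi0, h0⟩ := Finset.exists_mem_eq_inf s hs f
    refine le_antisymm (le_trans (Finset.inf_le hi0) (by rw [h0])) ?_
    exact Finset.le_inf fun i hi => add_le_add_right (Finset.inf_le hi) c

lemma val_ne_top {K : Type*} [Field K] (v : AddValuation K (WithTop ℤ)) {a : K} (ha : a ≠ 0) :
    v a ≠ ⊤ := by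
  intro h
  have h1 : v (a * a⁻¹) = v a + v a⁻¹ := v.map_mul a a⁻¹
  rw [mul_inv_cancel₀ ha, v.map_one, h, top_add] at h1
  exact (by simp : (0 : WithTop ℤ) ≠ ⊤) h1

lemma nsmul_ne_top' {t : WithTop ℤ} (ht : t ≠ ⊤) (k : ℕ) : k • t ≠ ⊤ := by
  induction k with
  | zero => simp
  | succ k ih => rw [succ_nsmul]; exact WithTop.add_ne_top.2 ⟨ih, ht⟩

open MvPolynomial Finset in
lemma val_prod {K : Type*} [Field K] (v : AddValuation K (WithTop ℤ)) {ι : Type*}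
    (s : Finset ι) (f : ι → K) : v (∏ i ∈ s, f i) = ∑ i ∈ s, v (f i) := by
  induction s using Finset.cons_induction with
  | empty => simpa using v.map_one
  | cons a s ha ih => rw [Finset.prod_cons, Finset.sum_cons, v.map_mul, ih]

open MvPolynomial Finset in
lemma homog_sum_eq {K : Type*} [Field K] {k n : ℕ} {p : MvPolynomial (Fin k) K}
    (hp : p.IsHomogeneous n) {s : Fin k →₀ ℕ} (hs : s ∈ p.support) :
    ∑ i, s i = n := by
  have h := hp (mem_support_iff.mp hs)
  replace h : Finsupp.degree s = n := by rw [Finsupp.degree_eq_weight_one]; exact h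
  rw [← h, Finsupp.degree]
  refine (Finset.sum_subset (Finset.subset_univ _) ?_).symm
  · intro i _ hi
    exact Finsupp.notMem_support_iff.mp hi

open MvPolynomial Finset in
/-- Core lower bound: `v(p(x)) ≥ n • v(x) + v(p)` for `p` homogeneous of degree `n`. -/
lemma val_eval_ge {K : Type*} [Field K] (v : AddValuation K (WithTop ℤ)) {k n : ℕ}
    {p : MvPolynomial (Fin k) K} (hp : p.IsHomogeneous n) (x : Fin k → K) :
    n • vTup v x + vPoly v p ≤ v (MvPolynomial.eval x p) := by
  rw [eval_eq']
  apply v.map_le_sum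
  intro s hs
  rw [v.map_mul]
  have h1 : vPoly v p ≤ v (coeff s p) := Finset.inf_le hs
  have h2 : n • vTup v x ≤ v (∏ i, x i ^ s i) := by
    rw [val_prod]
    calc n • vTup v x = (∑ i, s i) • vTup v x := by rw [homog_sum_eq hp hs]
      _ = ∑ i, (s i) • vTup v x := Finset.sum_smul
      _ ≤ ∑ i, (s i) • v (x i) :=
          Finset.sum_le_sum fun i _ => nsmul_le_nsmul_right (Finset.inf_le (mem_univ i)) _
      _ = ∑ i, v (x i ^ s i) := by simp [v.map_pow]
  calc n • vTup v x + vPoly v p ≤ v (∏ i, x i ^ s i) + v (coeff s p) := add_le_add h2 h1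
    _ = v (coeff s p) + v (∏ i, x i ^ s i) := add_comm _ _

open MvPolynomial Finset in
lemma homog_eval_smul {K : Type*} [Field K] {k n : ℕ}
    {p : MvPolynomial (Fin k) K} (hp : p.IsHomogeneous n) (c : K) (x : Fin k → K) :
    MvPolynomial.eval (c • x) p = c ^ n * MvPolynomial.eval x p := by
  rw [eval_eq', eval_eq', Finset.mul_sum]
  refine Finset.sum_congr rfl fun s hs => ?_
  have : ∏ i, (c • x) i ^ s i = c ^ n * ∏ i, x i ^ s i := by
    simp only [Pi.smul_apply, smul_eq_mul, mul_pow]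
    rw [Finset.prod_mul_distrib, Finset.prod_pow_eq_pow_sum, homog_sum_eq hp hs]
  rw [this]; ring

/-- The excess valuation `ε_f(x) = v(F(x)) - d·v(x) - v(F)` of a morphism (here expressed in
subtraction-free form, all quantities being finite) is independent of the lift, invariant
under scaling `x`, non-negative, and bounded above by `-(v(F) + v(G))` for any
pseudoinverse `G`. -/
theorem excess_valuation_properties {K : Type*} [Field K] (m M d : ℕ)
    (v : AddValuation K (WithTop ℤ))
    (F : Fin (M + 1) → MvPolynomial (Fin (m + 1)) K)
    (hF : ∀ j, (F j).IsHomogeneous d)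
    (hmor : ∀ z : Fin (m + 1) → AlgebraicClosure K,
      (∀ j, MvPolynomial.aeval z (F j) = 0) → z = 0)
    (x : Fin (m + 1) → K) (hx : x ≠ 0) :
    -- lift-independence: `v((λF)(x)) - v(λF) = v(F(x)) - v(F)`
    (∀ lam : K, lam ≠ 0 →
      vTup v (fun j => MvPolynomial.eval x (MvPolynomial.C lam * F j)) + vSys v F =
        vTup v (fun j => MvPolynomial.eval x (F j)) +
          vSys v (fun j => MvPolynomial.C lam * F j)) ∧
    -- scale-invariance: `v(F(cx)) - d·v(cx) = v(F(x)) - d·v(x)`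
    (∀ c : K, c ≠ 0 →
      vTup v (fun j => MvPolynomial.eval (c • x) (F j)) + d • vTup v x =
        vTup v (fun j => MvPolynomial.eval x (F j)) + d • vTup v (c • x)) ∧
    -- non-negativity: `v(F(x)) ≥ d·v(x) + v(F)`
    (d • vTup v x + vSys v F ≤ vTup v (fun j => MvPolynomial.eval x (F j))) ∧
    -- boundedness: `v(F(x)) + v(G) ≤ d·v(x)` for every pseudoinverse `G`
    (∀ (e : ℕ) (G : Fin (m + 1) → Fin (M + 1) → MvPolynomial (Fin (m + 1)) K),
      (∀ i j, (G i j).IsHomogeneous (e - d)) →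
      (∀ i, ∑ j, G i j * F j = MvPolynomial.X i ^ e) →
      vTup v (fun j => MvPolynomial.eval x (F j)) +
          (Finset.univ.inf fun p : Fin (m + 1) × Fin (M + 1) => vPoly v (G p.1 p.2)) ≤
        d • vTup v x) := by
  classical
  open MvPolynomial Finset in
  -- abbreviations
  have hvpoly_C : ∀ (lam : K), lam ≠ 0 → ∀ p : MvPolynomial (Fin (m + 1)) K,
      vPoly v (C lam * p) = v lam + vPoly v p := by
    intro lam hlam p
    have hsupp : (C lam * p).support = p.support := by
      ext s
      simp [MvPolynomial.mem_support_iff, MvPolynomial.coeff_C_mul, hlam]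
    unfold vPoly
    rw [hsupp, ← infAddConst]
    exact Finset.inf_congr rfl fun s _ => by rw [MvPolynomial.coeff_C_mul, v.map_mul]
  refine ⟨?_, ?_, ?_, ?_⟩
  · -- lift independence
    intro lam hlam
    have h1 : vTup v (fun j => MvPolynomial.eval x (C lam * F j)) =
        v lam + vTup v (fun j => MvPolynomial.eval x (F j)) := by
      unfold vTup
      rw [← infAddConst]
      refine Finset.inf_congr rfl fun j _ => ?_
      show v (MvPolynomial.eval x (C lam * F j)) = v lam + v (MvPolynomial.eval x (F j))
      rw [map_mul, eval_C, v.map_mul]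
    have h2 : vSys v (fun j => C lam * F j) = v lam + vSys v F := by
      unfold vSys
      rw [← infAddConst]
      exact Finset.inf_congr rfl fun j _ => hvpoly_C lam hlam (F j)
    rw [h1, h2]; abel
  · -- scale invariance
    intro c hc
    have h1 : vTup v (fun j => MvPolynomial.eval (c • x) (F j)) =
        d • v c + vTup v (fun j => MvPolynomial.eval x (F j)) := by
      unfold vTup
      rw [← infAddConst]
      refine Finset.inf_congr rfl fun j _ => ?_
      show v (MvPolynomial.eval (c • x) (F j)) = d • v c + v (MvPolynomial.eval x (F j))
      rw [homog_eval_smul (hF j) c x, v.map_mul, v.map_pow]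
    have h2 : vTup v (c • x) = v c + vTup v x := by
      unfold vTup
      rw [← infAddConst]
      refine Finset.inf_congr rfl fun i _ => ?_
      show v ((c • x) i) = v c + v (x i)
      rw [Pi.smul_apply, smul_eq_mul, v.map_mul]
    rw [h1, h2, smul_add]; abel
  · -- non-negativity
    refine Finset.le_inf fun j _ => ?_
    calc d • vTup v x + vSys v F ≤ d • vTup v x + vPoly v (F j) :=
          add_le_add_right (Finset.inf_le (Finset.mem_univ j)) _
      _ ≤ v (MvPolynomial.eval x (F j)) := val_eval_ge v (hF j) x
  · -- boundedness
    intro e G hG hGF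
    set t := vTup v x with ht
    set A := vTup v (fun j => MvPolynomial.eval x (F j)) with hA
    set B := (Finset.univ.inf fun p : Fin (m + 1) × Fin (M + 1) => vPoly v (G p.1 p.2)) with hB
    -- d ≤ e
    have hde : d ≤ e := by
      by_contra h
      push_neg at h
      have h0 : e - d = 0 := Nat.sub_eq_zero_of_le h.le
      have hhom : (∑ j, G 0 j * F j).IsHomogeneous d := by
        refine MvPolynomial.IsHomogeneous.sum _ _ _ fun j _ => ?_
        have := (hG 0 j).mul (hF j)
        rwa [h0, zero_add] at this
      rw [hGF 0] at hhom
      have := hhom.inj_right (MvPolynomial.isHomogeneous_X_pow _ _)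
        (pow_ne_zero _ (MvPolynomial.X_ne_zero _))
      omega
    have htne : t ≠ ⊤ := by
      obtain ⟨i1, hi1⟩ := Function.ne_iff.mp hx
      intro htop
      have : t ≤ v (x i1) := Finset.inf_le (Finset.mem_univ i1)
      rw [htop, top_le_iff] at this
      exact val_ne_top v hi1 this
    -- minimizer of v (x i)
    obtain ⟨i0, _, hi0⟩ := Finset.exists_mem_eq_inf Finset.univ Finset.univ_nonempty
      (fun i => v (x i))
    -- key inequality: e • t ≥ (e-d) • t + (B + A)
    have hkey : (e - d) • t + (B + A) ≤ e • t := by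
      have h1 : e • t = v (x i0 ^ e) := by rw [v.map_pow, ← hi0]; rfl
      have h2 : x i0 ^ e = MvPolynomial.eval x (∑ j, G i0 j * F j) := by
        rw [hGF i0]; simp
      rw [h1, h2, map_sum]
      apply v.map_le_sum
      intro j _
      rw [map_mul, v.map_mul]
      have hGe : (e - d) • t + B ≤ v (MvPolynomial.eval x (G i0 j)) := by
        calc (e - d) • t + B ≤ (e - d) • t + vPoly v (G i0 j) :=
              add_le_add_right (Finset.inf_le (Finset.mem_univ (i0, j))) _
          _ ≤ _ := val_eval_ge v (hG i0 j) x
      have hFe : A ≤ v (MvPolynomial.eval x (F j)) := Finset.inf_le (Finset.mem_univ j)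
      calc (e - d) • t + (B + A) = ((e - d) • t + B) + A := by rw [add_assoc]
        _ ≤ _ := add_le_add hGe hFe
    have hsplit : e • t = (e - d) • t + d • t := by
      rw [← add_nsmul, Nat.sub_add_cancel hde]
    rw [hsplit] at hkey
    rw [WithTop.add_le_add_iff_left (nsmul_ne_top' htne (e - d))] at hkey
    calc A + B = B + A := add_comm _ _
      _ ≤ d • t := hkey
end

section
/- Let K be a field with discrete valuation v, O its valuation ring, and f a morphism P^m → P^M of degree d with excess valuation ε_f. If x, y are v-normalized points (v(x) = v(y) = 0) with v(x - y) ≥ sup_{z ≠ 0} ε_f(z), then ε_f(x) = ε_f(y). -/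
section Aux

variable {K : Type*} [Field K] (v : AddValuation K (WithTop ℤ))

private lemma prod_sub_prod {ι : Type*} (s : Finset ι) (f g : ι → K) (c : WithTop ℤ)
    (h0f : ∀ i ∈ s, 0 ≤ v (f i)) (h0g : ∀ i ∈ s, 0 ≤ v (g i))
    (hc : ∀ i ∈ s, c ≤ v (f i - g i)) :
    c ≤ v (s.prod f - s.prod g) := by
  induction s using Finset.cons_induction with
  | empty => simp
  | cons a s ha ih =>
    have key : (Finset.cons a s ha).prod f - (Finset.cons a s ha).prod g
        = f a * (s.prod f - s.prod g) + (f a - g a) * s.prod g := by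
      rw [Finset.prod_cons, Finset.prod_cons]; ring
    rw [key]
    refine v.map_le_add ?_ ?_
    · rw [v.map_mul]
      have h1 : 0 ≤ v (f a) := h0f a (Finset.mem_cons_self a s)
      have h2 : c ≤ v (s.prod f - s.prod g) :=
        ih (fun i hi => h0f i (Finset.mem_cons_of_mem hi))
          (fun i hi => h0g i (Finset.mem_cons_of_mem hi))
          (fun i hi => hc i (Finset.mem_cons_of_mem hi))
      calc c = 0 + c := (zero_add c).symm
        _ ≤ v (f a) + v (s.prod f - s.prod g) := add_le_add h1 h2
    · rw [v.map_mul]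
      have h1 : c ≤ v (f a - g a) := hc a (Finset.mem_cons_self a s)
      have h2 : 0 ≤ v (s.prod g) := by
        refine Finset.prod_induction g (fun t => 0 ≤ v t) (fun a b ha hb => ?_) ?_
          (fun i hi => h0g i (Finset.mem_cons_of_mem hi))
        · show 0 ≤ v (a * b); rw [v.map_mul]; exact add_nonneg ha hb
        · show 0 ≤ v 1; rw [v.map_one]
      calc c = c + 0 := (add_zero c).symm
        _ ≤ v (f a - g a) + v (s.prod g) := add_le_add h1 h2

private lemma pow_sub_pow (a b : K) (n : ℕ) (c : WithTop ℤ)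
    (h0a : 0 ≤ v a) (h0b : 0 ≤ v b) (hc : c ≤ v (a - b)) :
    c ≤ v (a ^ n - b ^ n) := by
  have := prod_sub_prod v (Finset.range n) (fun _ => a) (fun _ => b) c
    (fun _ _ => h0a) (fun _ _ => h0b) (fun _ _ => hc)
  simpa using this

private lemma eval_sub_eval {m : ℕ} (p : MvPolynomial (Fin (m + 1)) K)
    (x y : Fin (m + 1) → K) (c : WithTop ℤ)
    (h0x : ∀ i, 0 ≤ v (x i)) (h0y : ∀ i, 0 ≤ v (y i))
    (hc : ∀ i, c ≤ v (x i - y i)) :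
    vPoly v p + c ≤ v (MvPolynomial.eval x p - MvPolynomial.eval y p) := by
  rw [MvPolynomial.eval_eq' x p, MvPolynomial.eval_eq' y p, ← Finset.sum_sub_distrib]
  refine v.map_le_sum fun s hs => ?_
  have key : MvPolynomial.coeff s p * ∏ i, x i ^ s i
      - MvPolynomial.coeff s p * ∏ i, y i ^ s i
      = MvPolynomial.coeff s p * ((∏ i, x i ^ s i) - ∏ i, y i ^ s i) := by ring
  rw [key, v.map_mul]
  refine add_le_add (Finset.inf_le hs) ?_
  refine prod_sub_prod v Finset.univ (fun i => x i ^ s i) (fun i => y i ^ s i) c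
    (fun i _ => ?_) (fun i _ => ?_) (fun i _ => ?_)
  · rw [v.map_pow]; exact nsmul_nonneg (h0x i) _
  · rw [v.map_pow]; exact nsmul_nonneg (h0y i) _
  · exact pow_sub_pow v _ _ _ c (h0x i) (h0y i) (hc i)

end Aux

/-- Local constancy of the excess valuation: if `B` bounds the excess valuation
`ε_f(z) = v(F(z)) - d·v(z) - v(F)` for all `z ≠ 0`, and if `x, y` are `v`-normalized points
with `v(x - y) ≥ B`, then `ε_f(x) = ε_f(y)` (equivalently `v(F(x)) = v(F(y))`). -/
theorem excess_valuation_locally_constant {K : Type*} [Field K] (m M d : ℕ)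
    (v : AddValuation K (WithTop ℤ)) (B : ℤ)
    (F : Fin (M + 1) → MvPolynomial (Fin (m + 1)) K)
    (hF : ∀ j, (F j).IsHomogeneous d)
    (hB : ∀ z : Fin (m + 1) → K, z ≠ 0 →
      vTup v (fun j => MvPolynomial.eval z (F j)) ≤ d • vTup v z + vSys v F + (B : WithTop ℤ))
    (x y : Fin (m + 1) → K) (hx : vTup v x = 0) (hy : vTup v y = 0)
    (hxy : (B : WithTop ℤ) ≤ vTup v (fun i => x i - y i)) :
    vTup v (fun j => MvPolynomial.eval x (F j)) =
      vTup v (fun j => MvPolynomial.eval y (F j)) := by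
  have h0x : ∀ i, 0 ≤ v (x i) := fun i => hx ▸ Finset.inf_le (Finset.mem_univ i)
  have h0y : ∀ i, 0 ≤ v (y i) := fun i => hy ▸ Finset.inf_le (Finset.mem_univ i)
  have hxne : x ≠ 0 := by
    intro h; rw [h] at hx
    simp [vTup, show v 0 = ⊤ from v.map_zero] at hx
  have hyne : y ≠ 0 := by
    intro h; rw [h] at hy
    simp [vTup, show v 0 = ⊤ from v.map_zero] at hy
  have hcx : ∀ i, (B : WithTop ℤ) ≤ v (x i - y i) := fun i =>
    le_trans hxy (Finset.inf_le (Finset.mem_univ i))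
  -- bound on the difference of evaluations
  have hdiff : ∀ j, vSys v F + (B : WithTop ℤ)
      ≤ v (MvPolynomial.eval x (F j) - MvPolynomial.eval y (F j)) := by
    intro j
    refine le_trans ?_ (eval_sub_eval v (F j) x y (B : WithTop ℤ) h0x h0y hcx)
    exact add_le_add (Finset.inf_le (Finset.mem_univ j)) le_rfl
  -- the excess bound applied at x and y, with vTup = 0
  have hAx : vTup v (fun j => MvPolynomial.eval x (F j)) ≤ vSys v F + (B : WithTop ℤ) := by
    have := hB x hxne
    rwa [hx, smul_zero, zero_add] at this
  have hAy : vTup v (fun j => MvPolynomial.eval y (F j)) ≤ vSys v F + (B : WithTop ℤ) := by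
    have := hB y hyne
    rwa [hy, smul_zero, zero_add] at this
  refine le_antisymm ?_ ?_
  · refine Finset.le_inf fun j _ => ?_
    have h1 : vTup v (fun j => MvPolynomial.eval x (F j)) ≤ v (MvPolynomial.eval x (F j)) :=
      Finset.inf_le (Finset.mem_univ j)
    have h2 : vTup v (fun j => MvPolynomial.eval x (F j))
        ≤ v (MvPolynomial.eval y (F j) - MvPolynomial.eval x (F j)) := by
      rw [v.map_sub_swap]
      exact le_trans hAx (hdiff j)
    have key : MvPolynomial.eval y (F j)
        = MvPolynomial.eval x (F j) + (MvPolynomial.eval y (F j) - MvPolynomial.eval x (F j)) := by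
      ring
    show vTup v (fun j => MvPolynomial.eval x (F j)) ≤ v (MvPolynomial.eval y (F j))
    rw [key]
    exact v.map_le_add h1 h2
  · refine Finset.le_inf fun j _ => ?_
    have h1 : vTup v (fun j => MvPolynomial.eval y (F j)) ≤ v (MvPolynomial.eval y (F j)) :=
      Finset.inf_le (Finset.mem_univ j)
    have h2 : vTup v (fun j => MvPolynomial.eval y (F j))
        ≤ v (MvPolynomial.eval x (F j) - MvPolynomial.eval y (F j)) :=
      le_trans hAy (hdiff j)
    have key : MvPolynomial.eval x (F j)
        = MvPolynomial.eval y (F j) + (MvPolynomial.eval x (F j) - MvPolynomial.eval y (F j)) := by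
      ring
    show vTup v (fun j => MvPolynomial.eval y (F j)) ≤ v (MvPolynomial.eval x (F j))
    rw [key]
    exact v.map_le_add h1 h2
end
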